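/- Let k ∈ ℕ be a constant and let c > 0. Consider bootstrap percolation on Q_{2,n} with infection threshold ⌈N/2⌉, where N = n + C(n,2), and where each vertex is initially infected independently with some probability p. Suppose that for all sufficiently large n and every vertex x ∈ V(Q_{2,n}), P(x ∉ A_k) ≤ exp(−c·n^{0.1}). Then there exists a constant d > 0 such that for all sufficiently large n and every vertex x, P(x ∉ A_{3k+2}) ≤ exp(−d·n^{1.1}). -/

import Mathlib

open Finset Filter
open scoped Classical

noncomputable section

/-- The infected set after `i` steps of `r`-neighbour bootstrap percolation on the graph `G`,
starting from the initial infected set `A0`: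
`A_{i+1} = A_i ∪ {v : |N(v) ∩ A_i| ≥ r}`. -/
def bootSets {V : Type*} [Fintype V] [DecidableEq V] (G : SimpleGraph V) (r : ℕ)
    (A0 : Finset V) : ℕ → Finset V
  | 0 => A0
  | i + 1 =>
      bootSets G r A0 i ∪
        Finset.univ.filter fun v => r ≤ (G.neighborFinset v ∩ bootSets G r A0 i).card

/-- `A0` percolates under the `r`-neighbour bootstrap process on `G`. -/
def percolates {V : Type*} [Fintype V] [DecidableEq V] (G : SimpleGraph V) (r : ℕ)
    (A0 : Finset V) : Prop :=
  ∃ i, bootSets G r A0 i = Finset.univ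

/-- The probability that the initial infected set is exactly `A`, when every vertex is
infected independently with probability `p`. -/
def configProb {V : Type*} [Fintype V] [DecidableEq V] (p : ℝ) (A : Finset V) : ℝ :=
  p ^ A.card * (1 - p) ^ (Fintype.card V - A.card)

/-- The probability of the event `E` about the initial infected set, when every vertex is
infected independently with probability `p`. -/
def probEvent {V : Type*} [Fintype V] [DecidableEq V] (p : ℝ) (E : Finset V → Prop) : ℝ :=
  ∑ A : Finset V, if E A then configProb p A else 0

/-- The generalized hypercube `Q_{k,n}`: vertices are `{0,1}^n`, two vertices being adjacent
iff their Hamming distance is between `1` and `k`.  The usual hypercube `Q_n` is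
`cubeGraph n 1`. -/
def cubeGraph (n k : ℕ) : SimpleGraph (Fin n → Bool) where
  Adj x y := 1 ≤ hammingDist x y ∧ hammingDist x y ≤ k
  symm := by
    constructor
    intro x y h
    rwa [hammingDist_comm]
  loopless := by
    constructor
    intro x h
    simp [hammingDist_self] at h

/-- The critical probability for `r`-neighbour bootstrap percolation on `Q_{k,n}` where every
vertex is initially infected independently with probability `p`:
the supremum of all `p ∈ (0,1)` for which percolation has probability at most `1/2`. -/
def critProb (n k r : ℕ) : ℝ :=
  sSup {p : ℝ | p ∈ Set.Ioo (0 : ℝ) 1 ∧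
    probEvent p (fun A0 => percolates (cubeGraph n k) r A0) ≤ 1 / 2}

/-- The `Boot1(t)` process with base threshold `r`: at step `1` the threshold is `r - t`,
afterwards it is `r`. -/
def boot1Sets {V : Type*} [Fintype V] [DecidableEq V] (G : SimpleGraph V) (r t : ℕ)
    (A0 : Finset V) : ℕ → Finset V
  | 0 => A0
  | 1 => A0 ∪ Finset.univ.filter fun v => r - t ≤ (G.neighborFinset v ∩ A0).card
  | i + 2 =>
      boot1Sets G r t A0 (i + 1) ∪
        Finset.univ.filter fun v =>
          r ≤ (G.neighborFinset v ∩ boot1Sets G r t A0 (i + 1)).card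

/-- The `Boot2(t)` (= `Boot3(t)`) process with base threshold `r`: at step `1` the threshold
is `r - 2t`, at step `2` it is `r - t`, and afterwards it is `r`. -/
def boot2Sets {V : Type*} [Fintype V] [DecidableEq V] (G : SimpleGraph V) (r t : ℕ)
    (A0 : Finset V) : ℕ → Finset V
  | 0 => A0
  | 1 => A0 ∪ Finset.univ.filter fun v => r - 2 * t ≤ (G.neighborFinset v ∩ A0).card
  | 2 =>
      boot2Sets G r t A0 1 ∪
        Finset.univ.filter fun v =>
          r - t ≤ (G.neighborFinset v ∩ boot2Sets G r t A0 1).card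
  | i + 3 =>
      boot2Sets G r t A0 (i + 2) ∪
        Finset.univ.filter fun v =>
          r ≤ (G.neighborFinset v ∩ boot2Sets G r t A0 (i + 2)).card

section ProbAux

variable {V : Type*} [Fintype V] [DecidableEq V]

/-- An event depends only on the part of the configuration inside `B`. -/
def Determines (B : Finset V) (E : Finset V → Prop) : Prop :=
  ∀ A A' : Finset V, A ∩ B = A' ∩ B → (E A ↔ E A')

lemma determines_mono {B B' : Finset V} {E : Finset V → Prop} (hBB : B ⊆ B')
    (hE : Determines B E) : Determines B' E := by
  intro A A' hAA
  apply hE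
  have h1 : A ∩ B = A ∩ B' ∩ B := by
    rw [Finset.inter_assoc, Finset.inter_eq_right.mpr hBB]
  have h2 : A' ∩ B = A' ∩ B' ∩ B := by
    rw [Finset.inter_assoc, Finset.inter_eq_right.mpr hBB]
  rw [h1, h2, hAA]

lemma determines_forall {ι : Type*} {B : Finset V} {E : ι → Finset V → Prop}
    (hE : ∀ t, Determines B (E t)) : Determines B (fun A => ∀ t, E t A) := by
  intro A A' hAA
  exact forall_congr' fun t => hE t A A' hAA

lemma configProb_nonneg {p : ℝ} (hp0 : 0 ≤ p) (hp1 : p ≤ 1) (A : Finset V) :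
    0 ≤ configProb p A := by
  have h : (0:ℝ) ≤ 1 - p := by linarith
  exact mul_nonneg (pow_nonneg hp0 _) (pow_nonneg h _)

lemma probEvent_nonneg {p : ℝ} (hp0 : 0 ≤ p) (hp1 : p ≤ 1) (E : Finset V → Prop) :
    0 ≤ probEvent p E := by
  apply Finset.sum_nonneg
  intro A _
  split
  · exact configProb_nonneg hp0 hp1 A
  · exact le_refl _

lemma probEvent_congr {p : ℝ} {E E' : Finset V → Prop} (h : ∀ A, E A ↔ E' A) :
    probEvent p E = probEvent p E' := by
  unfold probEvent
  apply Finset.sum_congr rfl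
  intro A _
  exact if_congr (h A) rfl rfl

lemma sum_weights (p : ℝ) (C : Finset V) :
    ∑ T ∈ C.powerset, p ^ T.card * (1 - p) ^ (C.card - T.card) = 1 := by
  have h := Finset.prod_add (fun _ : V => p) (fun _ : V => (1 - p)) C
  have h1 : ∏ _i ∈ C, (p + (1 - p)) = 1 := by simp
  rw [h1] at h
  have h2 : ∑ T ∈ C.powerset, p ^ T.card * (1 - p) ^ (C.card - T.card) =
      ∑ t ∈ C.powerset, (∏ _i ∈ t, p) * ∏ _i ∈ C \ t, (1 - p) := by
    apply Finset.sum_congr rfl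
    intro T hT
    rw [Finset.mem_powerset] at hT
    rw [Finset.prod_const, Finset.prod_const, Finset.card_sdiff_of_subset hT]
  rw [h2, ← h]

lemma weight_split (p : ℝ) {B S T : Finset V} (hS : S ⊆ B) (hT : T ⊆ Finset.univ \ B) :
    configProb p (S ∪ T) =
      (p ^ S.card * (1 - p) ^ (B.card - S.card)) *
        (p ^ T.card * (1 - p) ^ ((Finset.univ \ B : Finset V).card - T.card)) := by
  have hd : Disjoint S T :=
    Finset.disjoint_of_subset_left hS (Finset.disjoint_of_subset_right hT Finset.disjoint_sdiff)
  have hcard : (S ∪ T).card = S.card + T.card := Finset.card_union_of_disjoint hd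
  have h1 : S.card ≤ B.card := Finset.card_le_card hS
  have h2 : T.card ≤ (Finset.univ \ B : Finset V).card := Finset.card_le_card hT
  have h3 : (Finset.univ \ B : Finset V).card = Fintype.card V - B.card := by
    rw [Finset.card_sdiff_of_subset (Finset.subset_univ B), Finset.card_univ]
  have h4 : B.card ≤ Fintype.card V := by
    rw [← Finset.card_univ]; exact Finset.card_le_card (Finset.subset_univ B)
  have h5 : Fintype.card V - (S.card + T.card) =
      (B.card - S.card) + ((Finset.univ \ B : Finset V).card - T.card) := by omega
  rw [configProb, hcard, h5, pow_add, pow_add]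
  ring

lemma union_inter_left {B S T : Finset V} (hS : S ⊆ B) (hT : T ⊆ Finset.univ \ B) :
    (S ∪ T) ∩ B = S := by
  ext a
  simp only [Finset.mem_inter, Finset.mem_union]
  constructor
  · rintro ⟨h | h, hB⟩
    · exact h
    · exact absurd hB (by simpa using (Finset.mem_sdiff.mp (hT h)).2)
  · intro hx
    exact ⟨Or.inl hx, hS hx⟩

lemma union_sdiff_right {B S T : Finset V} (hS : S ⊆ B) (hT : T ⊆ Finset.univ \ B) :
    (S ∪ T) \ B = T := by
  ext a
  simp only [Finset.mem_sdiff, Finset.mem_union]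
  constructor
  · rintro ⟨h | h, hB⟩
    · exact absurd (hS h) hB
    · exact h
  · intro hx
    exact ⟨Or.inr hx, by simpa using (Finset.mem_sdiff.mp (hT hx)).2⟩

lemma sum_decomp (g : Finset V → ℝ) (B : Finset V) :
    ∑ A : Finset V, g A =
      ∑ S ∈ B.powerset, ∑ T ∈ (Finset.univ \ B).powerset, g (S ∪ T) := by
  rw [← Finset.sum_product']
  apply Finset.sum_nbij' (i := fun A => (A ∩ B, A \ B)) (j := fun x => x.1 ∪ x.2)
  · intro A _
    simp only [Finset.mem_product, Finset.mem_powerset]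
    exact ⟨Finset.inter_subset_right, fun a ha =>
      Finset.mem_sdiff.mpr ⟨Finset.mem_univ a, (Finset.mem_sdiff.mp ha).2⟩⟩
  · intro x _
    exact Finset.mem_univ _
  · intro A _
    ext a
    simp only [Finset.mem_union, Finset.mem_inter, Finset.mem_sdiff]
    tauto
  · intro x hx
    simp only [Finset.mem_product, Finset.mem_powerset] at hx
    exact Prod.ext (union_inter_left hx.1 hx.2) (union_sdiff_right hx.1 hx.2)
  · intro A _
    congr 1
    ext a
    simp only [Finset.mem_union, Finset.mem_inter, Finset.mem_sdiff]
    tauto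

lemma probEvent_decomp (p : ℝ) (E : Finset V → Prop) (B : Finset V) :
    probEvent p E = ∑ S ∈ B.powerset, ∑ T ∈ (Finset.univ \ B).powerset,
      if E (S ∪ T) then configProb p (S ∪ T) else 0 :=
  sum_decomp (fun A => if E A then configProb p A else 0) B

lemma probEvent_restrict (p : ℝ) {B : Finset V} {E : Finset V → Prop}
    (hE : Determines B E) :
    probEvent p E =
      ∑ S ∈ B.powerset, if E S then p ^ S.card * (1 - p) ^ (B.card - S.card) else 0 := by
  rw [probEvent_decomp p E B]
  apply Finset.sum_congr rfl
  intro S hS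
  rw [Finset.mem_powerset] at hS
  have key : ∀ T ∈ (Finset.univ \ B : Finset V).powerset,
      (if E (S ∪ T) then configProb p (S ∪ T) else 0) =
        (if E S then p ^ S.card * (1 - p) ^ (B.card - S.card) else 0) *
          (p ^ T.card * (1 - p) ^ ((Finset.univ \ B : Finset V).card - T.card)) := by
    intro T hT
    rw [Finset.mem_powerset] at hT
    have hiff : E (S ∪ T) ↔ E S := hE _ _ (by rw [union_inter_left hS hT,
      Finset.inter_eq_left.mpr hS])
    rw [weight_split p hS hT]
    by_cases hES : E S
    · rw [if_pos (hiff.mpr hES), if_pos hES]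
    · rw [if_neg (fun hc => hES (hiff.mp hc)), if_neg hES, zero_mul]
  rw [Finset.sum_congr rfl key, ← Finset.mul_sum, sum_weights, mul_one]

lemma probEvent_mul (p : ℝ) {B : Finset V} {E F : Finset V → Prop}
    (hE : Determines B E) (hF : Determines (Finset.univ \ B) F) :
    probEvent p (fun A => E A ∧ F A) = probEvent p E * probEvent p F := by
  have lhs : probEvent p (fun A => E A ∧ F A) =
      ∑ S ∈ B.powerset, ∑ T ∈ (Finset.univ \ B).powerset,
        (if E S then p ^ S.card * (1 - p) ^ (B.card - S.card) else 0) *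
          (if F T then p ^ T.card * (1 - p) ^ ((Finset.univ \ B : Finset V).card - T.card)
            else 0) := by
    rw [probEvent_decomp p (fun A => E A ∧ F A) B]
    apply Finset.sum_congr rfl
    intro S hS
    rw [Finset.mem_powerset] at hS
    apply Finset.sum_congr rfl
    intro T hT
    rw [Finset.mem_powerset] at hT
    have hiffE : E (S ∪ T) ↔ E S := hE _ _ (by rw [union_inter_left hS hT,
      Finset.inter_eq_left.mpr hS])
    have hiffF : F (S ∪ T) ↔ F T := hF _ _ (by
      have h1 : (S ∪ T) ∩ (Finset.univ \ B) = (S ∪ T) \ B := by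
        ext a; simp only [Finset.mem_inter, Finset.mem_sdiff, Finset.mem_univ, true_and]
      rw [h1, union_sdiff_right hS hT, Finset.inter_eq_left.mpr hT])
    rw [weight_split p hS hT]
    by_cases hES : E S <;> by_cases hFT : F T <;>
      simp [hES, hFT, hiffE, hiffF]
  rw [lhs, probEvent_restrict p hE, probEvent_restrict p hF, Finset.sum_mul_sum]

lemma probEvent_true (p : ℝ) : probEvent p (fun _ : Finset V => True) = 1 := by
  unfold probEvent
  simp only [if_true]
  have h1 : ∑ A : Finset V, configProb p A =
      ∑ A ∈ (Finset.univ : Finset V).powerset, configProb p A := by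
    rw [Finset.powerset_univ]
  rw [h1]
  have h2 : ∀ A ∈ (Finset.univ : Finset V).powerset,
      configProb p A = p ^ A.card * (1 - p) ^ ((Finset.univ : Finset V).card - A.card) := by
    intro A _
    rw [configProb, Finset.card_univ]
  rw [Finset.sum_congr rfl h2, sum_weights]

lemma probEvent_indep (p : ℝ) :
    ∀ (M : ℕ) (B : Fin M → Finset V) (E : Fin M → (Finset V → Prop)),
      (∀ s t, s ≠ t → Disjoint (B s) (B t)) → (∀ t, Determines (B t) (E t)) →
      probEvent p (fun A => ∀ t, E t A) = ∏ t, probEvent p (E t) := by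
  intro M
  induction M with
  | zero =>
    intro B E _ _
    rw [Fin.prod_univ_zero]
    rw [probEvent_congr (E' := fun _ => True) (fun A => by
      constructor
      · intro _; trivial
      · intro _ t; exact t.elim0)]
    exact probEvent_true p
  | succ M IH =>
    intro B E hdisj hdet
    have hsub : ∀ t : Fin M, B t.succ ⊆ Finset.univ \ B 0 := by
      intro t
      apply Finset.subset_sdiff.mpr
      exact ⟨Finset.subset_univ _, (hdisj 0 t.succ (Fin.succ_ne_zero t).symm).symm⟩
    have hF : Determines (Finset.univ \ B 0) (fun A => ∀ t : Fin M, E t.succ A) :=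
      determines_forall (fun t => determines_mono (hsub t) (hdet t.succ))
    rw [probEvent_congr (E' := fun A => E 0 A ∧ ∀ t : Fin M, E t.succ A)
      (fun A => Fin.forall_fin_succ)]
    rw [probEvent_mul p (hdet 0) hF]
    rw [IH (fun t => B t.succ) (fun t => E t.succ)
      (fun s t hst => hdisj s.succ t.succ (fun hc => hst (Fin.succ_injective M hc)))
      (fun t => hdet t.succ)]
    rw [Fin.prod_univ_succ]

lemma probEvent_le_sum {ι : Type*} (p : ℝ) (hp0 : 0 ≤ p) (hp1 : p ≤ 1)
    (E : Finset V → Prop) (T : Finset ι) (F : ι → Finset V → Prop)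
    (hcov : ∀ A, E A → ∃ i ∈ T, F i A) :
    probEvent p E ≤ ∑ i ∈ T, probEvent p (F i) := by
  unfold probEvent
  rw [Finset.sum_comm]
  apply Finset.sum_le_sum
  intro A _
  by_cases hEA : E A
  · obtain ⟨i₀, hi₀, hFi₀⟩ := hcov A hEA
    rw [if_pos hEA]
    calc configProb p A = (if F i₀ A then configProb p A else 0) := by rw [if_pos hFi₀]
      _ ≤ ∑ i ∈ T, if F i A then configProb p A else 0 := by
        apply Finset.single_le_sum (f := fun i => if F i A then configProb p A else 0)
        · intro i _
          split
          · exact configProb_nonneg hp0 hp1 A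
          · exact le_refl _
        · exact hi₀
  · rw [if_neg hEA]
    apply Finset.sum_nonneg
    intro i _
    split
    · exact configProb_nonneg hp0 hp1 A
    · exact le_refl _

end ProbAux

section CubeAux

variable {n : ℕ}

/-- Flip the coordinates of `x` in `S`. -/
def flipSet (x : Fin n → Bool) (S : Finset (Fin n)) : Fin n → Bool :=
  fun i => if i ∈ S then !(x i) else x i

lemma flipSet_empty (x : Fin n → Bool) : flipSet x ∅ = x := by
  funext i; simp [flipSet]

lemma filter_flipSet_ne (x : Fin n → Bool) (S T : Finset (Fin n)) (hST : Disjoint S T) :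
    (Finset.univ.filter fun i => flipSet x S i ≠ flipSet x T i) = S ∪ T := by
  ext i
  simp only [Finset.mem_filter, Finset.mem_univ, true_and, Finset.mem_union]
  by_cases hS : i ∈ S <;> by_cases hT : i ∈ T
  · exact absurd hT (Finset.disjoint_left.mp hST hS)
  · simp [flipSet, hS, hT]
  · simp [flipSet, hS, hT]
  · simp [flipSet, hS, hT]

lemma hammingDist_flipSet (x : Fin n → Bool) {S T : Finset (Fin n)} (hST : Disjoint S T) :
    hammingDist (flipSet x S) (flipSet x T) = S.card + T.card := by
  have h : hammingDist (flipSet x S) (flipSet x T) =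
      (Finset.univ.filter fun i => flipSet x S i ≠ flipSet x T i).card := rfl
  rw [h, filter_flipSet_ne x S T hST, Finset.card_union_of_disjoint hST]

lemma hammingDist_flipSet_self (x : Fin n → Bool) (S : Finset (Fin n)) :
    hammingDist x (flipSet x S) = S.card := by
  have h := hammingDist_flipSet x (S := ∅) (T := S) (Finset.disjoint_left.mpr (by simp))
  rwa [flipSet_empty, Finset.card_empty, zero_add] at h

lemma flipSet_flipSet (x : Fin n → Bool) {S T : Finset (Fin n)} (hST : Disjoint S T) :
    flipSet (flipSet x S) T = flipSet x (S ∪ T) := by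
  funext i
  simp only [flipSet, Finset.mem_union]
  by_cases hS : i ∈ S <;> by_cases hT : i ∈ T
  · exact absurd hT (Finset.disjoint_left.mp hST hS)
  · simp [hS, hT]
  · simp [hS, hT]
  · simp [hS, hT]

lemma flipSet_injective (x : Fin n → Bool) : Function.Injective (flipSet x) := by
  intro S T h
  ext i
  have hi := congrFun h i
  simp only [flipSet] at hi
  by_cases hS : i ∈ S <;> by_cases hT : i ∈ T
  · simp [hS, hT]
  · rw [if_pos hS, if_neg hT] at hi
    cases x i <;> simp_all
  · rw [if_neg hS, if_pos hT] at hi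
    cases x i <;> simp_all
  · simp [hS, hT]

lemma mem_bootSets_succ {V : Type*} [Fintype V] [DecidableEq V] (G : SimpleGraph V)
    (r : ℕ) (A0 : Finset V) (i : ℕ) (v : V) :
    v ∈ bootSets G r A0 (i + 1) ↔
      v ∈ bootSets G r A0 i ∨ r ≤ (G.neighborFinset v ∩ bootSets G r A0 i).card := by
  rw [bootSets]
  simp [Finset.mem_union, Finset.mem_filter]

/-- Locality: membership of `v` in the bootstrap process after `j` steps on `Q_{2,n}` only
depends on the initial configuration within Hamming distance `2j` of `v`. -/
lemma boot_local (r : ℕ) :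
    ∀ (j : ℕ) (v : Fin n → Bool) (A A' : Finset (Fin n → Bool)),
      (∀ w, hammingDist v w ≤ 2 * j → (w ∈ A ↔ w ∈ A')) →
      (v ∈ bootSets (cubeGraph n 2) r A j ↔ v ∈ bootSets (cubeGraph n 2) r A' j) := by
  intro j
  induction j with
  | zero =>
    intro v A A' hAA
    exact hAA v (by simp)
  | succ j IH =>
    intro v A A' hAA
    rw [mem_bootSets_succ, mem_bootSets_succ]
    have h1 : v ∈ bootSets (cubeGraph n 2) r A j ↔ v ∈ bootSets (cubeGraph n 2) r A' j := by
      apply IH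
      intro w hw
      exact hAA w (by omega)
    have h2 : (cubeGraph n 2).neighborFinset v ∩ bootSets (cubeGraph n 2) r A j =
        (cubeGraph n 2).neighborFinset v ∩ bootSets (cubeGraph n 2) r A' j := by
      ext w
      simp only [Finset.mem_inter, SimpleGraph.mem_neighborFinset]
      constructor
      · rintro ⟨hadj, hw⟩
        refine ⟨hadj, ?_⟩
        rw [← IH w A A' ?_]
        · exact hw
        · intro u hu
          apply hAA
          calc hammingDist v u ≤ hammingDist v w + hammingDist w u := hammingDist_triangle _ _ _
            _ ≤ 2 + 2 * j := by
              have : hammingDist v w ≤ 2 := hadj.2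
              omega
            _ ≤ 2 * (j + 1) := by omega
      · rintro ⟨hadj, hw⟩
        refine ⟨hadj, ?_⟩
        rw [IH w A A' ?_]
        · exact hw
        · intro u hu
          apply hAA
          calc hammingDist v u ≤ hammingDist v w + hammingDist w u := hammingDist_triangle _ _ _
            _ ≤ 2 + 2 * j := by
              have : hammingDist v w ≤ 2 := hadj.2
              omega
            _ ≤ 2 * (j + 1) := by omega
    rw [h1, h2]

/-- The Hamming ball of radius `ρ` around `v`. -/
def hBall (v : Fin n → Bool) (ρ : ℕ) : Finset (Fin n → Bool) :=
  Finset.univ.filter fun w => hammingDist v w ≤ ρ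

lemma determines_boot (r k : ℕ) (v : Fin n → Bool) :
    Determines (hBall v (2 * k)) (fun A => v ∉ bootSets (cubeGraph n 2) r A k) := by
  intro A A' hAA
  have key : ∀ w, hammingDist v w ≤ 2 * k → (w ∈ A ↔ w ∈ A') := by
    intro w hw
    have hwball : w ∈ hBall v (2 * k) := by
      simp [hBall, hw]
    constructor
    · intro hwa
      have : w ∈ A' ∩ hBall v (2 * k) := by
        rw [← hAA]; exact Finset.mem_inter.mpr ⟨hwa, hwball⟩
      exact (Finset.mem_inter.mp this).1
    · intro hwa
      have : w ∈ A ∩ hBall v (2 * k) := by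
        rw [hAA]; exact Finset.mem_inter.mpr ⟨hwa, hwball⟩
      exact (Finset.mem_inter.mp this).1
  exact not_congr (boot_local r k v A A' key)

/-- One step of the walk: an uninfected vertex has an uninfected neighbour obtained by
flipping two fresh coordinates. -/
lemma exists_step (r : ℕ) (A0 : Finset (Fin n → Bool)) (j : ℕ) (v : Fin n → Bool)
    (Φ : Finset (Fin n)) (hv : v ∉ bootSets (cubeGraph n 2) r A0 (j + 1))
    (hr : r ≤ Φ.card.choose 2) :
    ∃ P : Finset (Fin n), P ⊆ Φ ∧ P.card = 2 ∧
      flipSet v P ∉ bootSets (cubeGraph n 2) r A0 j := by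
  by_contra hcon
  push_neg at hcon
  rw [mem_bootSets_succ] at hv
  push_neg at hv
  obtain ⟨-, hv2⟩ := hv
  set I := (Φ.powersetCard 2).image (flipSet v) with hI
  have hIsub : I ⊆ (cubeGraph n 2).neighborFinset v ∩ bootSets (cubeGraph n 2) r A0 j := by
    intro w hw
    rw [hI, Finset.mem_image] at hw
    obtain ⟨P, hP, rfl⟩ := hw
    rw [Finset.mem_powersetCard] at hP
    refine Finset.mem_inter.mpr ⟨?_, ?_⟩
    · rw [SimpleGraph.mem_neighborFinset]
      constructor
      · rw [hammingDist_flipSet_self, hP.2]; omega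
      · rw [hammingDist_flipSet_self, hP.2]
    · exact hcon P hP.1 hP.2
  have hIcard : I.card = Φ.card.choose 2 := by
    rw [hI, Finset.card_image_of_injective _ (flipSet_injective v),
      Finset.card_powersetCard]
  have := Finset.card_le_card hIsub
  omega

/-- A walk of length `q`: from an uninfected vertex at time `j + q` we may flip `2q` fresh
coordinates and reach a vertex uninfected at time `j`. -/
lemma exists_walk (r : ℕ) (A0 : Finset (Fin n → Bool)) (j : ℕ) :
    ∀ (q : ℕ) (v : Fin n → Bool) (Φ : Finset (Fin n)),
      v ∉ bootSets (cubeGraph n 2) r A0 (j + q) →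
      r ≤ (Φ.card - 2 * q).choose 2 →
      ∃ S : Finset (Fin n), S ⊆ Φ ∧ S.card = 2 * q ∧
        flipSet v S ∉ bootSets (cubeGraph n 2) r A0 j := by
  intro q
  induction q with
  | zero =>
    intro v Φ hv _
    exact ⟨∅, Finset.empty_subset _, by simp, by rwa [flipSet_empty]⟩
  | succ q IH =>
    intro v Φ hv hr
    have hv' : v ∉ bootSets (cubeGraph n 2) r A0 ((j + q) + 1) := by
      have he : j + (q + 1) = (j + q) + 1 := by omega
      rwa [he] at hv
    have hr1 : r ≤ Φ.card.choose 2 :=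
      le_trans hr (Nat.choose_le_choose 2 (Nat.sub_le _ _))
    obtain ⟨P, hPsub, hPcard, hPnot⟩ := exists_step r A0 (j + q) v Φ hv' hr1
    have hdisj0 : Disjoint P (Φ \ P) := Finset.disjoint_sdiff
    have hcard' : (Φ \ P).card = Φ.card - 2 := by
      rw [Finset.card_sdiff_of_subset hPsub, hPcard]
    have hr2 : r ≤ ((Φ \ P).card - 2 * q).choose 2 := by
      have harith : (Φ \ P).card - 2 * q = Φ.card - 2 * (q + 1) := by
        rw [hcard']; omega
      rwa [harith]
    obtain ⟨S', hS'sub, hS'card, hS'not⟩ := IH (flipSet v P) (Φ \ P) hPnot hr2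
    have hdisj : Disjoint P S' := Finset.disjoint_of_subset_right hS'sub Finset.disjoint_sdiff
    refine ⟨P ∪ S', ?_, ?_, ?_⟩
    · apply Finset.union_subset hPsub (hS'sub.trans (Finset.sdiff_subset))
    · rw [Finset.card_union_of_disjoint hdisj, hPcard, hS'card]; omega
    · rwa [← flipSet_flipSet v hdisj]

/-- Extraction of `m` walks from `x` using pairwise disjoint sets of fresh coordinates. -/
lemma exists_multi (r : ℕ) (A0 : Finset (Fin n → Bool)) (j q : ℕ) (x : Fin n → Bool)
    (hx : x ∉ bootSets (cubeGraph n 2) r A0 (j + q)) :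
    ∀ (m : ℕ) (Φ : Finset (Fin n)),
      r ≤ (Φ.card - 2 * q * m).choose 2 →
      ∃ S : Fin m → Finset (Fin n),
        (∀ t, S t ⊆ Φ) ∧ (∀ t, (S t).card = 2 * q) ∧
        (∀ s t, s ≠ t → Disjoint (S s) (S t)) ∧
        (∀ t, flipSet x (S t) ∉ bootSets (cubeGraph n 2) r A0 j) := by
  intro m
  induction m with
  | zero =>
    intro Φ _
    exact ⟨fun t => t.elim0, fun t => t.elim0, fun t => t.elim0,
      fun s t _ => s.elim0, fun t => t.elim0⟩
  | succ m IH =>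
    intro Φ hr
    have hr1 : r ≤ (Φ.card - 2 * q).choose 2 := by
      refine le_trans hr (Nat.choose_le_choose 2 ?_)
      have h1 : 2 * q ≤ 2 * q * (m + 1) := by nlinarith
      omega
    obtain ⟨S0, hS0sub, hS0card, hS0not⟩ := exists_walk r A0 j q x Φ hx hr1
    have hr2 : r ≤ ((Φ \ S0).card - 2 * q * m).choose 2 := by
      have hcard' : (Φ \ S0).card = Φ.card - 2 * q := by
        rw [Finset.card_sdiff_of_subset hS0sub, hS0card]
      have harith : (Φ \ S0).card - 2 * q * m = Φ.card - 2 * q * (m + 1) := by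
        rw [hcard']
        have h2 : 2 * q * (m + 1) = 2 * q * m + 2 * q := by ring
        omega
      rwa [harith]
    obtain ⟨S', hS'sub, hS'card, hS'disj, hS'not⟩ := IH (Φ \ S0) hr2
    refine ⟨Fin.cons S0 S', ?_, ?_, ?_, ?_⟩
    · intro t
      refine Fin.cases ?_ ?_ t
      · exact hS0sub
      · intro t'
        simpa using (hS'sub t').trans Finset.sdiff_subset
    · intro t
      refine Fin.cases ?_ ?_ t
      · simpa using hS0card
      · intro t'; simpa using hS'card t'
    · intro s t hst
      rcases Fin.eq_zero_or_eq_succ s with rfl | ⟨s', rfl⟩ <;>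
        rcases Fin.eq_zero_or_eq_succ t with rfl | ⟨t', rfl⟩
      · exact absurd rfl hst
      · simp only [Fin.cons_zero, Fin.cons_succ]
        exact Finset.disjoint_of_subset_right (hS'sub t') Finset.disjoint_sdiff
      · simp only [Fin.cons_zero, Fin.cons_succ]
        exact (Finset.disjoint_of_subset_right (hS'sub s') Finset.disjoint_sdiff).symm
      · simp only [Fin.cons_succ]
        exact hS'disj s' t' (fun hc => hst (by rw [hc]))
    · intro t
      refine Fin.cases ?_ ?_ t
      · simpa using hS0not
      · intro t'; simpa using hS'not t'

end CubeAux

lemma two_mul_choose_two : ∀ M : ℕ, 2 * M.choose 2 + M = M * M := by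
  intro M
  induction M with
  | zero => simp
  | succ M IH =>
    have h1 : (M + 1).choose 2 = M.choose 1 + M.choose 2 := Nat.choose_succ_succ M 1
    rw [h1, Nat.choose_one_right]
    nlinarith [IH]

set_option maxHeartbeats 1600000 in
theorem boost_uninfected_prob_Q2n' (k : ℕ) (c : ℝ) (hc : 0 < c) (p : ℕ → ℝ)
    (hp : ∀ n, p n ∈ Set.Icc (0 : ℝ) 1)
    (h : ∃ n₀ : ℕ, ∀ n ≥ n₀, ∀ x : Fin n → Bool,
      probEvent (p n) (fun A0 => x ∉ bootSets (cubeGraph n 2)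
        ⌈((n + n.choose 2 : ℕ) : ℝ) / 2⌉₊ A0 k) ≤
        Real.exp (-c * (n : ℝ) ^ ((0.1 : ℝ)))) :
    ∃ d : ℝ, 0 < d ∧ ∃ n₁ : ℕ, ∀ n ≥ n₁, ∀ x : Fin n → Bool,
      probEvent (p n) (fun A0 => x ∉ bootSets (cubeGraph n 2)
        ⌈((n + n.choose 2 : ℕ) : ℝ) / 2⌉₊ A0 (3 * k + 2)) ≤
        Real.exp (-d * (n : ℝ) ^ ((1.1 : ℝ))) := by
  classical
  obtain ⟨n₀, h₀⟩ := h
  set q : ℕ := 2 * k + 2 with hq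
  have hqpos : 0 < q := by omega
  set d : ℝ := c / (32 * q) with hd
  have hqR : (0:ℝ) < (q:ℝ) := by exact_mod_cast hqpos
  have hdpos : 0 < d := by rw [hd]; positivity
  refine ⟨d, hdpos, ?_⟩
  have hev : ∀ᶠ (N : ℕ) in atTop, (5 : ℝ) / d ≤ (N : ℝ) ^ (0.05 : ℝ) := by
    have h1 : Tendsto (fun x : ℝ => x ^ (0.05 : ℝ)) atTop atTop :=
      tendsto_rpow_atTop (by norm_num)
    exact (h1.comp tendsto_natCast_atTop_atTop).eventually_ge_atTop _
  obtain ⟨n₂, hn₂⟩ := eventually_atTop.mp hev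
  refine ⟨n₀ + n₂ + 1000 * (k + 1), ?_⟩
  intro n hn x
  have hn0 : n₀ ≤ n := by omega
  have hn2 : n₂ ≤ n := by omega
  have hnbig : 1000 * (k + 1) ≤ n := by exact le_trans (Nat.le_add_left _ _) hn
  set r : ℕ := ⌈((n + n.choose 2 : ℕ) : ℝ) / 2⌉₊ with hrdef
  set m : ℕ := n / (8 * q) with hm
  -- atom for 2*q*m
  obtain ⟨u, hu⟩ : ∃ u, 2 * q * m = u := ⟨_, rfl⟩
  have h4u : 4 * u ≤ n := by
    have h1 : n / (8 * q) * (8 * q) ≤ n := Nat.div_mul_le_self n (8 * q)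
    rw [← hm] at h1
    have h2 : 4 * u = m * (8 * q) := by rw [← hu]; ring
    omega
  have hnlt4 : n < 4 * u + 8 * q := by
    have hmod := Nat.div_add_mod n (8 * q)
    rw [← hm] at hmod
    have hmlt : n % (8 * q) < 8 * q := Nat.mod_lt n (by omega)
    have h2 : 8 * q * m = 4 * u := by rw [← hu]; ring
    omega
  obtain ⟨M, hM⟩ : ∃ M, n - u = M := ⟨_, rfl⟩
  have h3n : 3 * n ≤ 4 * M := by omega
  have hMn : M ≤ n := by omega
  -- the threshold is at most `M.choose 2`
  have hcore : n + n.choose 2 ≤ 2 * M.choose 2 := by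
    have e1 := two_mul_choose_two n
    have e2 := two_mul_choose_two M
    have h9 : 9 * (n * n) ≤ 16 * (M * M) := by
      have := Nat.mul_le_mul h3n h3n
      linarith only [this]
    have hnn : 24 * n ≤ n * n := Nat.mul_le_mul (by omega : 24 ≤ n) (le_refl n)
    linarith only [e1, e2, h9, hnn, hMn]
  have hrle : r ≤ M.choose 2 := by
    rw [hrdef]
    apply Nat.ceil_le.mpr
    rw [div_le_iff₀ (by norm_num : (0:ℝ) < 2)]
    exact_mod_cast (show n + n.choose 2 ≤ M.choose 2 * 2 by omega)
  have hnR : (1:ℝ) ≤ (n:ℝ) := by exact_mod_cast (show 1 ≤ n by omega)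
  have hnpos : (0:ℝ) < (n:ℝ) := by linarith
  have hexp1 : (n:ℝ) ^ u = Real.exp ((u : ℝ) * Real.log (n:ℝ)) := by
    rw [Real.exp_nat_mul, Real.exp_log hnpos]
  have hexp2 : (Real.exp (-c * (n : ℝ) ^ ((0.1 : ℝ)))) ^ m =
      Real.exp ((m : ℝ) * (-c * (n:ℝ) ^ ((0.1:ℝ)))) := by
    rw [Real.exp_nat_mul]
  -- key numerical estimate
  have hypos : (0:ℝ) < (n:ℝ) ^ ((0.05:ℝ)) := Real.rpow_pos_of_pos hnpos _
  have hzpos : (0:ℝ) < (n:ℝ) ^ ((0.1:ℝ)) := Real.rpow_pos_of_pos hnpos _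
  have hsplit1 : (n:ℝ) ^ ((1.1:ℝ)) = (n:ℝ) * (n:ℝ) ^ ((0.1:ℝ)) := by
    rw [show (1.1:ℝ) = 1 + 0.1 by norm_num, Real.rpow_add hnpos, Real.rpow_one]
  have hsplit2 : (n:ℝ) ^ ((1.1:ℝ)) = (n:ℝ) * ((n:ℝ) ^ ((0.05:ℝ)) * (n:ℝ) ^ ((0.05:ℝ))) := by
    rw [show (1.1:ℝ) = 1 + ((0.05:ℝ) + 0.05) by norm_num, Real.rpow_add hnpos,
      Real.rpow_one, Real.rpow_add hnpos]
  have hm_lb : (n:ℝ) / (16 * (q:ℝ)) ≤ (m:ℝ) := by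
    have hc1 : (n:ℝ) < 4 * (u:ℝ) + 8 * (q:ℝ) := by exact_mod_cast hnlt4
    have hc15 : (u:ℝ) = 2 * (q:ℝ) * (m:ℝ) := by exact_mod_cast hu.symm
    have hc2 : (16:ℝ) * (q:ℝ) ≤ (n:ℝ) := by
      exact_mod_cast (show 16 * q ≤ n by omega)
    rw [div_le_iff₀ (by positivity)]
    linarith only [hc1, hc15, hc2]
  have hu_ub : (u:ℝ) ≤ (n:ℝ) / 4 := by
    have h1 : (4:ℝ) * (u:ℝ) ≤ (n:ℝ) := by exact_mod_cast h4u
    linarith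
  have hlog : Real.log (n:ℝ) ≤ 20 * (n:ℝ) ^ ((0.05:ℝ)) := by
    have h1 : Real.log ((n:ℝ) ^ ((0.05:ℝ))) = 0.05 * Real.log (n:ℝ) :=
      Real.log_rpow hnpos _
    have h2 : Real.log ((n:ℝ) ^ ((0.05:ℝ))) ≤ (n:ℝ) ^ ((0.05:ℝ)) - 1 :=
      Real.log_le_sub_one_of_pos hypos
    linarith only [h1, h2, hypos]
  have hf4 : (5:ℝ) / d ≤ (n:ℝ) ^ ((0.05:ℝ)) := hn₂ n hn2
  have hlogpos : (0:ℝ) ≤ Real.log (n:ℝ) := Real.log_nonneg hnR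
  have hA : (u:ℝ) * Real.log (n:ℝ) ≤ d * ((n:ℝ) ^ ((1.1:ℝ))) := by
    have step : (u:ℝ) * Real.log (n:ℝ) ≤ ((n:ℝ) / 4) * (20 * (n:ℝ) ^ ((0.05:ℝ))) :=
      mul_le_mul hu_ub hlog hlogpos (by positivity)
    have h5 : (5:ℝ) ≤ d * (n:ℝ) ^ ((0.05:ℝ)) := by
      rw [div_le_iff₀ hdpos] at hf4; linarith
    rw [hsplit2]
    calc (u:ℝ) * Real.log (n:ℝ) ≤ ((n:ℝ) / 4) * (20 * (n:ℝ) ^ ((0.05:ℝ))) := step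
      _ = 5 * ((n:ℝ) * (n:ℝ) ^ ((0.05:ℝ))) := by ring
      _ ≤ (d * (n:ℝ) ^ ((0.05:ℝ))) * ((n:ℝ) * (n:ℝ) ^ ((0.05:ℝ))) :=
          mul_le_mul_of_nonneg_right h5 (by positivity)
      _ = d * ((n:ℝ) * ((n:ℝ) ^ ((0.05:ℝ)) * (n:ℝ) ^ ((0.05:ℝ)))) := by ring
  have hB : 2 * d * ((n:ℝ) ^ ((1.1:ℝ))) ≤ (m:ℝ) * (c * (n:ℝ) ^ ((0.1:ℝ))) := by
    have h2d : 2 * d = c / (16 * (q:ℝ)) := by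
      rw [hd]; field_simp; ring
    rw [hsplit1]
    calc 2 * d * ((n:ℝ) * (n:ℝ) ^ ((0.1:ℝ))) =
        ((n:ℝ) / (16 * (q:ℝ))) * (c * (n:ℝ) ^ ((0.1:ℝ))) := by
          rw [h2d]; field_simp
      _ ≤ (m:ℝ) * (c * (n:ℝ) ^ ((0.1:ℝ))) := by
          apply mul_le_mul_of_nonneg_right hm_lb
          positivity
  have hfinal : (u:ℝ) * Real.log (n:ℝ) + (m:ℝ) * (-c * (n:ℝ) ^ ((0.1:ℝ))) ≤
      -d * ((n:ℝ) ^ ((1.1:ℝ))) := by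
    have hmz : (m:ℝ) * (-c * (n:ℝ) ^ ((0.1:ℝ))) = -((m:ℝ) * (c * (n:ℝ) ^ ((0.1:ℝ)))) := by
      ring
    rw [hmz]
    linarith [hA, hB]
  -- the family of events used in the union bound
  set F : (Fin m → Finset (Fin n)) → Finset (Fin n → Bool) → Prop :=
    fun S A => ∀ t, flipSet x (S t) ∉ bootSets (cubeGraph n 2) r A k with hF
  set T : Finset (Fin m → Finset (Fin n)) :=
    Finset.univ.filter fun S =>
      (∀ t, (S t).card = 2 * q) ∧ (∀ s t, s ≠ t → Disjoint (S s) (S t)) with hT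
  have hx32 : 3 * k + 2 = k + q := by omega
  have hcov : ∀ A, (x ∉ bootSets (cubeGraph n 2) r A (3 * k + 2)) → ∃ S ∈ T, F S A := by
    intro A hA
    rw [hx32] at hA
    obtain ⟨S, hsub, hcard, hdisj, hnot⟩ :=
      exists_multi r A k q x hA m Finset.univ (by
        rw [show (Finset.univ : Finset (Fin n)).card = n from by simp, hu, hM]
        exact hrle)
    refine ⟨S, ?_, hnot⟩
    rw [hT, Finset.mem_filter]
    exact ⟨Finset.mem_univ _, hcard, hdisj⟩
  have step1 : probEvent (p n)
      (fun A => x ∉ bootSets (cubeGraph n 2) r A (3 * k + 2)) ≤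
      ∑ S ∈ T, probEvent (p n) (F S) :=
    probEvent_le_sum (p n) (hp n).1 (hp n).2 _ T F hcov
  have hfac : ∀ S ∈ T, probEvent (p n) (F S) ≤ (Real.exp (-c * (n : ℝ) ^ ((0.1 : ℝ)))) ^ m := by
    intro S hS
    rw [hT, Finset.mem_filter] at hS
    obtain ⟨-, hcard, hdisj⟩ := hS
    have hballs : ∀ s t : Fin m, s ≠ t →
        Disjoint (hBall (flipSet x (S s)) (2 * k)) (hBall (flipSet x (S t)) (2 * k)) := by
      intro s t hst
      rw [Finset.disjoint_left]
      intro y hys hyt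
      simp only [hBall, Finset.mem_filter, Finset.mem_univ, true_and] at hys hyt
      have htri : hammingDist (flipSet x (S s)) (flipSet x (S t)) ≤ 4 * k := by
        calc hammingDist (flipSet x (S s)) (flipSet x (S t)) ≤
            hammingDist (flipSet x (S s)) y + hammingDist y (flipSet x (S t)) :=
              hammingDist_triangle _ _ _
          _ ≤ 2 * k + 2 * k := by
              have h2 : hammingDist y (flipSet x (S t)) ≤ 2 * k := by
                rw [hammingDist_comm]; exact hyt
              omega
          _ = 4 * k := by omega
      have heq : hammingDist (flipSet x (S s)) (flipSet x (S t)) =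
          (S s).card + (S t).card := hammingDist_flipSet x (hdisj s t hst)
      rw [heq, hcard s, hcard t] at htri
      omega
    have hprod := probEvent_indep (p n) m (fun t => hBall (flipSet x (S t)) (2 * k))
      (fun t A => flipSet x (S t) ∉ bootSets (cubeGraph n 2) r A k) hballs
      (fun t => determines_boot r k (flipSet x (S t)))
    calc probEvent (p n) (F S) =
        ∏ t : Fin m, probEvent (p n)
          (fun A => flipSet x (S t) ∉ bootSets (cubeGraph n 2) r A k) := hprod
      _ ≤ ∏ _t : Fin m, Real.exp (-c * (n : ℝ) ^ ((0.1 : ℝ))) := by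
          apply Finset.prod_le_prod
          · intro t _
            exact probEvent_nonneg (hp n).1 (hp n).2 _
          · intro t _
            have hb := h₀ n hn0 (flipSet x (S t))
            rw [← hrdef] at hb
            exact hb
      _ = (Real.exp (-c * (n : ℝ) ^ ((0.1 : ℝ)))) ^ m := by
          rw [Finset.prod_const, Finset.card_univ, Fintype.card_fin]
  have hεpos : (0:ℝ) ≤ Real.exp (-c * (n : ℝ) ^ ((0.1 : ℝ))) := le_of_lt (Real.exp_pos _)
  have step2 : ∑ S ∈ T, probEvent (p n) (F S) ≤
      (T.card : ℝ) * (Real.exp (-c * (n : ℝ) ^ ((0.1 : ℝ)))) ^ m := by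
    calc ∑ S ∈ T, probEvent (p n) (F S) ≤
        T.card • ((Real.exp (-c * (n : ℝ) ^ ((0.1 : ℝ)))) ^ m) :=
          Finset.sum_le_card_nsmul T _ _ hfac
      _ = (T.card : ℝ) * (Real.exp (-c * (n : ℝ) ^ ((0.1 : ℝ)))) ^ m := nsmul_eq_mul _ _
  have hTcard : T.card ≤ (n ^ (2 * q)) ^ m := by
    have hsub : T ⊆ Fintype.piFinset
        (fun _ : Fin m => (Finset.univ : Finset (Fin n)).powersetCard (2 * q)) := by
      intro S hS
      rw [hT, Finset.mem_filter] at hS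
      rw [Fintype.mem_piFinset]
      intro t
      exact Finset.mem_powersetCard.mpr ⟨Finset.subset_univ _, hS.2.1 t⟩
    calc T.card ≤ _ := Finset.card_le_card hsub
      _ = ∏ _t : Fin m, ((Finset.univ : Finset (Fin n)).powersetCard (2 * q)).card :=
          Fintype.card_piFinset _
      _ = (n.choose (2 * q)) ^ m := by
          rw [Finset.card_powersetCard, Finset.card_univ, Fintype.card_fin,
            Finset.prod_const, Finset.card_univ, Fintype.card_fin]
      _ ≤ (n ^ (2 * q)) ^ m := Nat.pow_le_pow_left (Nat.choose_le_pow n (2 * q)) m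
  have hcast : (T.card : ℝ) ≤ (n:ℝ) ^ u := by
    calc (T.card : ℝ) ≤ (((n ^ (2 * q)) ^ m : ℕ) : ℝ) := by exact_mod_cast hTcard
      _ = (n:ℝ) ^ (2 * q * m) := by push_cast; rw [← pow_mul]
      _ = (n:ℝ) ^ u := by rw [hu]
  calc probEvent (p n) (fun A0 => x ∉ bootSets (cubeGraph n 2) r A0 (3 * k + 2)) ≤
        ∑ S ∈ T, probEvent (p n) (F S) := step1
    _ ≤ (T.card : ℝ) * (Real.exp (-c * (n : ℝ) ^ ((0.1 : ℝ)))) ^ m := step2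
    _ ≤ (n:ℝ) ^ u * (Real.exp (-c * (n : ℝ) ^ ((0.1 : ℝ)))) ^ m :=
        mul_le_mul_of_nonneg_right hcast (pow_nonneg hεpos m)
    _ = Real.exp ((u:ℝ) * Real.log (n:ℝ) + (m:ℝ) * (-c * (n:ℝ) ^ ((0.1:ℝ)))) := by
        rw [hexp1, hexp2, ← Real.exp_add]
    _ ≤ Real.exp (-d * ((n:ℝ) ^ ((1.1:ℝ)))) := Real.exp_le_exp.mpr hfinal

/-- Let `k ∈ ℕ` and `c > 0`, and consider bootstrap percolation on
`Q_{2,n}` with threshold `⌈N/2⌉` (where `N = n + C(n,2)`) and initial infection probability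
`p = p(n)`.  If for all sufficiently large `n` every vertex satisfies
`P(x ∉ A_k) ≤ exp(-c n^{0.1})`, then there is a constant `d > 0` such that for all
sufficiently large `n` every vertex satisfies `P(x ∉ A_{3k+2}) ≤ exp(-d n^{1.1})`. -/
theorem boost_uninfected_prob_Q2n (k : ℕ) (c : ℝ) (hc : 0 < c) (p : ℕ → ℝ)
    (hp : ∀ n, p n ∈ Set.Icc (0 : ℝ) 1)
    (h : ∃ n₀ : ℕ, ∀ n ≥ n₀, ∀ x : Fin n → Bool,
      probEvent (p n) (fun A0 => x ∉ bootSets (cubeGraph n 2)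
        ⌈((n + n.choose 2 : ℕ) : ℝ) / 2⌉₊ A0 k) ≤
        Real.exp (-c * (n : ℝ) ^ ((0.1 : ℝ)))) :
    ∃ d : ℝ, 0 < d ∧ ∃ n₁ : ℕ, ∀ n ≥ n₁, ∀ x : Fin n → Bool,
      probEvent (p n) (fun A0 => x ∉ bootSets (cubeGraph n 2)
        ⌈((n + n.choose 2 : ℕ) : ℝ) / 2⌉₊ A0 (3 * k + 2)) ≤
        Real.exp (-d * (n : ℝ) ^ ((1.1 : ℝ))) := by
  exact boost_uninfected_prob_Q2n' k c hc p hp h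

end
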